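/- Let G = (V, E) be a multigraph with minimum cut value c > 0, and let alpha >= 1 be a constant. Then the number of cuts (S, S^c) with |E(S, S^c)| <= alpha * c is at most |V|^{2*alpha}. -/

import Mathlib

set_option linter.unusedSectionVars false

open scoped Classical

/-- The edges of a finite multigraph crossing a vertex cut `S`. -/
def cutEdges {V E : Type} [Fintype E] [DecidableEq V]
    (ends : E → V × V) (S : Finset V) : Finset E :=
  Finset.univ.filter (fun e =>
    ((ends e).1 ∈ S ∧ (ends e).2 ∉ S) ∨ ((ends e).1 ∉ S ∧ (ends e).2 ∈ S))

namespace KargerAux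

open Finset

variable {V E : Type} [Fintype V] [Fintype E] [DecidableEq V]

/-- `P` is a partition of the vertex set into nonempty parts. -/
def IsPart (P : Finset (Finset V)) : Prop :=
  (∀ p ∈ P, p.Nonempty) ∧ (∀ p ∈ P, ∀ q ∈ P, p ≠ q → Disjoint p q) ∧
    (∀ v : V, ∃ p ∈ P, v ∈ p)

/-- `S` is a union of parts of `P`. -/
def compat (P : Finset (Finset V)) (S : Finset V) : Prop :=
  ∀ p ∈ P, p ⊆ S ∨ Disjoint p S

/-- Edges whose two endpoints lie in different parts of `P`. -/
noncomputable def crossing (ends : E → V × V) (P : Finset (Finset V)) : Finset E :=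
  Finset.univ.filter (fun e => ¬ ∃ p ∈ P, (ends e).1 ∈ p ∧ (ends e).2 ∈ p)

/-- The α-minimum cuts (containing `v₀`) compatible with `P`. -/
noncomputable def AA (ends : E → V × V) (c : ℕ) (α : ℝ) (v₀ : V) (P : Finset (Finset V)) :
    Finset (Finset V) :=
  Finset.univ.filter (fun S => v₀ ∈ S ∧ S ≠ Finset.univ ∧
    ((cutEdges ends S).card : ℝ) ≤ α * c ∧ compat P S)

lemma cutEdges_subset_crossing (ends : E → V × V) {P : Finset (Finset V)}
    {S : Finset V} (hS : compat P S) : cutEdges ends S ⊆ crossing ends P := by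
  intro e he
  simp only [cutEdges, mem_filter, mem_univ, true_and] at he
  simp only [crossing, mem_filter, mem_univ, true_and]
  rintro ⟨p, hp, h1, h2⟩
  rcases hS p hp with h | h
  · rcases he with ⟨_, h4⟩ | ⟨h3, _⟩
    · exact h4 (h h2)
    · exact h3 (h h1)
  · rcases he with ⟨h3, _⟩ | ⟨_, h4⟩
    · exact (Finset.disjoint_left.mp h h1) h3
    · exact (Finset.disjoint_left.mp h h2) h4

lemma eq_biUnion_of_compat {P : Finset (Finset V)} (hP : IsPart P) {S : Finset V}
    (hS : compat P S) : S = (P.filter (· ⊆ S)).biUnion id := by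
  apply Finset.Subset.antisymm
  · intro v hv
    obtain ⟨p, hp, hvp⟩ := hP.2.2 v
    rcases hS p hp with h | h
    · exact Finset.mem_biUnion.mpr ⟨p, Finset.mem_filter.mpr ⟨hp, h⟩, hvp⟩
    · exact absurd hv (Finset.disjoint_left.mp h hvp)
  · intro v hv
    obtain ⟨p, hp, hvp⟩ := Finset.mem_biUnion.mp hv
    exact (Finset.mem_filter.mp hp).2 hvp

/-- The number of compatible cuts containing `v₀` is at most `2 ^ (|P| - 1)`. -/
lemma card_AA_le_two_pow (ends : E → V × V) (c : ℕ) (α : ℝ) (v₀ : V)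
    {P : Finset (Finset V)} (hP : IsPart P) :
    (AA ends c α v₀ P).card ≤ 2 ^ (P.card - 1) := by
  obtain ⟨p₀, hp₀, hv₀⟩ := hP.2.2 v₀
  have key : ∀ S ∈ AA ends c α v₀ P,
      P.filter (· ⊆ S) = insert p₀ ((P.erase p₀).filter (· ⊆ S)) := by
    intro S hS
    simp only [AA, mem_filter, mem_univ, true_and] at hS
    have hp₀S : p₀ ⊆ S := by
      rcases hS.2.2.2 p₀ hp₀ with h | h
      · exact h
      · exact absurd hS.1 (Finset.disjoint_left.mp h hv₀)
    ext q
    simp only [mem_filter, mem_insert, mem_erase]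
    constructor
    · rintro ⟨hq, hqS⟩
      by_cases h : q = p₀
      · exact Or.inl h
      · exact Or.inr ⟨⟨h, hq⟩, hqS⟩
    · rintro (rfl | ⟨⟨_, hq⟩, hqS⟩)
      · exact ⟨hp₀, hp₀S⟩
      · exact ⟨hq, hqS⟩
  calc (AA ends c α v₀ P).card
      ≤ ((P.erase p₀).powerset).card := by
        apply Finset.card_le_card_of_injOn (fun S => (P.erase p₀).filter (· ⊆ S))
        · intro S _
          exact Finset.mem_powerset.mpr (Finset.filter_subset _ _)
        · intro S hS S' hS' h
          rw [Finset.mem_coe] at hS hS'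
          dsimp only at h
          have e1 := eq_biUnion_of_compat hP
            ((Finset.mem_filter.mp hS).2.2.2.2 : compat P S)
          have e2 := eq_biUnion_of_compat hP
            ((Finset.mem_filter.mp hS').2.2.2.2 : compat P S')
          rw [key S hS] at e1
          rw [key S' hS'] at e2
          rw [e1, e2, h]
    _ = 2 ^ (P.card - 1) := by
        rw [Finset.card_powerset, Finset.card_erase_of_mem hp₀]


lemma filter_cutEdges_card (ends : E → V × V) {P : Finset (Finset V)} (hP : IsPart P)
    (e : E) :
    (P.filter (fun p => e ∈ cutEdges ends p)).card
      = if e ∈ crossing ends P then 2 else 0 := by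
  obtain ⟨p, hp, h1⟩ := hP.2.2 (ends e).1
  obtain ⟨q, hq, h2⟩ := hP.2.2 (ends e).2
  by_cases hcr : e ∈ crossing ends P
  · rw [if_pos hcr]
    simp only [crossing, mem_filter, mem_univ, true_and] at hcr
    have hpq : p ≠ q := by
      rintro rfl
      exact hcr ⟨p, hp, h1, h2⟩
    have h2p : (ends e).2 ∉ p := fun h => hcr ⟨p, hp, h1, h⟩
    have h1q : (ends e).1 ∉ q := fun h => hcr ⟨q, hq, h, h2⟩
    have : P.filter (fun p => e ∈ cutEdges ends p) = {p, q} := by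
      ext r
      simp only [mem_filter, mem_insert, mem_singleton]
      constructor
      · rintro ⟨hr, hre⟩
        simp only [cutEdges, mem_filter, mem_univ, true_and] at hre
        rcases hre with ⟨ha, _⟩ | ⟨_, hb⟩
        · left
          by_contra hne
          exact (Finset.disjoint_left.mp (hP.2.1 r hr p hp hne) ha) h1
        · right
          by_contra hne
          exact (Finset.disjoint_left.mp (hP.2.1 r hr q hq hne) hb) h2
      · rintro (rfl | rfl)
        · refine ⟨hp, ?_⟩
          simp only [cutEdges, mem_filter, mem_univ, true_and]
          exact Or.inl ⟨h1, h2p⟩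
        · refine ⟨hq, ?_⟩
          simp only [cutEdges, mem_filter, mem_univ, true_and]
          exact Or.inr ⟨h1q, h2⟩
    rw [this, Finset.card_insert_of_notMem (by simpa using hpq), Finset.card_singleton]
  · rw [if_neg hcr]
    simp only [crossing, mem_filter, mem_univ, true_and, not_not] at hcr
    obtain ⟨t, ht, ht1, ht2⟩ := hcr
    rw [Finset.card_eq_zero, Finset.filter_eq_empty_iff]
    intro r hr hre
    simp only [cutEdges, mem_filter, mem_univ, true_and] at hre
    rcases hre with ⟨ha, hb⟩ | ⟨ha, hb⟩
    · rcases eq_or_ne r t with rfl | hne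
      · exact hb ht2
      · exact (Finset.disjoint_left.mp (hP.2.1 r hr t ht hne) ha) ht1
    · rcases eq_or_ne r t with rfl | hne
      · exact ha ht1
      · exact (Finset.disjoint_left.mp (hP.2.1 r hr t ht hne) hb) ht2

lemma sum_cutEdges_card (ends : E → V × V) {P : Finset (Finset V)} (hP : IsPart P) :
    ∑ p ∈ P, (cutEdges ends p).card = 2 * (crossing ends P).card := by
  have h1 : ∀ (s : Finset E), s.card = ∑ e : E, if e ∈ s then 1 else 0 := by
    intro s
    simp [Finset.sum_ite_mem]
  calc ∑ p ∈ P, (cutEdges ends p).card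
      = ∑ p ∈ P, ∑ e : E, (if e ∈ cutEdges ends p then 1 else 0) := by
        exact Finset.sum_congr rfl fun p _ => h1 _
    _ = ∑ e : E, ∑ p ∈ P, (if e ∈ cutEdges ends p then 1 else 0) := Finset.sum_comm
    _ = ∑ e : E, (P.filter (fun p => e ∈ cutEdges ends p)).card := by
        exact Finset.sum_congr rfl fun e _ => (Finset.card_filter _ _).symm
    _ = ∑ e : E, (if e ∈ crossing ends P then 2 else 0) := by
        exact Finset.sum_congr rfl fun e _ => filter_cutEdges_card ends hP e
    _ = 2 * (crossing ends P).card := by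
        simp [Finset.sum_ite_mem, Finset.sum_const, mul_comm]

lemma part_ne_univ {P : Finset (Finset V)} (hP : IsPart P) (hk : 2 ≤ P.card)
    {p : Finset V} (hp : p ∈ P) : p ≠ Finset.univ := by
  obtain ⟨q, hq, hqp⟩ := Finset.exists_mem_ne (lt_of_lt_of_le one_lt_two hk) p
  intro h
  obtain ⟨v, hv⟩ := hP.1 q hq
  exact (Finset.disjoint_left.mp (hP.2.1 q hq p hp hqp) hv) (h ▸ Finset.mem_univ v)

lemma kc_le_two_m (ends : E → V × V) (c : ℕ)
    (hmin : ∀ S : Finset V, S.Nonempty → S ≠ Finset.univ → c ≤ (cutEdges ends S).card)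
    {P : Finset (Finset V)} (hP : IsPart P) (hk : 2 ≤ P.card) :
    P.card * c ≤ 2 * (crossing ends P).card := by
  rw [← sum_cutEdges_card ends hP]
  calc P.card * c = ∑ _p ∈ P, c := by rw [Finset.sum_const, smul_eq_mul]
    _ ≤ ∑ p ∈ P, (cutEdges ends p).card :=
        Finset.sum_le_sum fun p hp => hmin p (hP.1 p hp) (part_ne_univ hP hk hp)

lemma merge (ends : E → V × V) {P : Finset (Finset V)} (hP : IsPart P)
    {e : E} (he : e ∈ crossing ends P) :
    ∃ P' : Finset (Finset V), IsPart P' ∧ P'.card = P.card - 1 ∧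
      ∀ S, compat P S → e ∉ cutEdges ends S → compat P' S := by
  obtain ⟨p, hp, h1⟩ := hP.2.2 (ends e).1
  obtain ⟨q, hq, h2⟩ := hP.2.2 (ends e).2
  simp only [crossing, mem_filter, mem_univ, true_and] at he
  have hpq : p ≠ q := by rintro rfl; exact he ⟨p, hp, h1, h2⟩
  set Q := (P.erase p).erase q with hQ
  have hmemQ : ∀ r, r ∈ Q ↔ r ∈ P ∧ r ≠ p ∧ r ≠ q := by
    intro r
    simp only [hQ, Finset.mem_erase]
    tauto
  have hnotin : p ∪ q ∉ Q := by
    rw [hmemQ]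
    rintro ⟨hr, hrp, -⟩
    obtain ⟨v, hv⟩ := hP.1 p hp
    exact (Finset.disjoint_left.mp (hP.2.1 _ hr _ hp hrp)
      (Finset.mem_union_left _ hv)) hv
  refine ⟨insert (p ∪ q) Q, ⟨?_, ?_, ?_⟩, ?_, ?_⟩
  · intro r hr
    rcases Finset.mem_insert.mp hr with rfl | hr
    · obtain ⟨v, hv⟩ := hP.1 p hp
      exact ⟨v, Finset.mem_union_left _ hv⟩
    · exact hP.1 r ((hmemQ r).mp hr).1
  · intro r hr s hs hrs
    rcases Finset.mem_insert.mp hr with rfl | hr <;>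
      rcases Finset.mem_insert.mp hs with rfl | hs
    · exact absurd rfl hrs
    · obtain ⟨hs1, hs2, hs3⟩ := (hmemQ s).mp hs
      exact Finset.disjoint_union_left.mpr
        ⟨(hP.2.1 s hs1 p hp hs2).symm, (hP.2.1 s hs1 q hq hs3).symm⟩
    · obtain ⟨hr1, hr2, hr3⟩ := (hmemQ r).mp hr
      exact Finset.disjoint_union_left.mpr
        ⟨(hP.2.1 r hr1 p hp hr2).symm, (hP.2.1 r hr1 q hq hr3).symm⟩ |>.symm
    · obtain ⟨hr1, -, -⟩ := (hmemQ r).mp hr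
      obtain ⟨hs1, -, -⟩ := (hmemQ s).mp hs
      exact hP.2.1 r hr1 s hs1 hrs
  · intro v
    obtain ⟨t, ht, hvt⟩ := hP.2.2 v
    rcases eq_or_ne t p with htp | htp
    · refine ⟨p ∪ q, Finset.mem_insert_self _ _, ?_⟩
      exact Finset.mem_union_left _ (htp ▸ hvt)
    rcases eq_or_ne t q with htq | htq
    · refine ⟨p ∪ q, Finset.mem_insert_self _ _, ?_⟩
      exact Finset.mem_union_right _ (htq ▸ hvt)
    · exact ⟨t, Finset.mem_insert_of_mem ((hmemQ t).mpr ⟨ht, htp, htq⟩), hvt⟩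
  · have hqQ : q ∈ P.erase p := Finset.mem_erase.mpr ⟨Ne.symm hpq, hq⟩
    have h2le : 2 ≤ P.card := Finset.one_lt_card.mpr ⟨p, hp, q, hq, hpq⟩
    have e1 : Q.card = (P.erase p).card - 1 := Finset.card_erase_of_mem hqQ
    have e2 : (P.erase p).card = P.card - 1 := Finset.card_erase_of_mem hp
    rw [Finset.card_insert_of_notMem hnotin]
    omega
  · intro S hS hecut
    simp only [cutEdges, mem_filter, mem_univ, true_and] at hecut
    push_neg at hecut
    intro r hr
    rcases Finset.mem_insert.mp hr with rfl | hr
    · rcases hS p hp with hps | hps <;> rcases hS q hq with hqs | hqs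
      · exact Or.inl (Finset.union_subset hps hqs)
      · exact absurd (hecut.1 (hps h1)) (Finset.disjoint_left.mp hqs h2)
      · exact absurd (hqs h2) (hecut.2 (Finset.disjoint_left.mp hps h1))
      · exact Or.inr (Finset.disjoint_union_left.mpr ⟨hps, hqs⟩)
    · exact hS r ((hmemQ r).mp hr).1

/-- The recursive bound function: `2^(k-1)` for `k ≤ r`, then multiplied by `k/(k-β)`. -/
noncomputable def hfun (β : ℝ) (r : ℕ) : ℕ → ℝ
  | 0 => 1
  | k+1 => if k+1 ≤ r then 2^k else hfun β r k * (k+1) / ((k+1 : ℝ) - β)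

lemma hfun_nonneg {β : ℝ} {r : ℕ} (hβ : β ≤ r) : ∀ k, 0 ≤ hfun β r k := by
  intro k
  induction k with
  | zero => norm_num [hfun]
  | succ k ih =>
    rw [hfun]
    split_ifs with h
    · positivity
    · have hk : (r : ℝ) < (k+1 : ℕ) := by exact_mod_cast Nat.lt_of_not_le h
      have : 0 < ((k:ℝ)+1) - β := by push_cast at hk ⊢; linarith
      have : 0 ≤ hfun β r k * ((k:ℝ)+1) := by positivity
      positivity

lemma hfun_succ (β : ℝ) (r : ℕ) {k : ℕ} (h : r < k) :
    hfun β r k = hfun β r (k-1) * k / ((k:ℝ) - β) := by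
  obtain ⟨j, rfl⟩ : ∃ j, k = j+1 := ⟨k-1, by omega⟩
  rw [hfun, if_neg (by omega)]
  push_cast
  simp

lemma hfun_base (β : ℝ) (r : ℕ) {k : ℕ} (h1 : 1 ≤ k) (h2 : k ≤ r) :
    hfun β r k = 2 ^ (k - 1) := by
  obtain ⟨j, rfl⟩ : ∃ j, k = j+1 := ⟨k-1, by omega⟩
  rw [hfun, if_pos h2]
  simp

/-- Main induction: the number of compatible α-min cuts is at most `hfun (2α) r |P|`. -/
lemma main_ind (ends : E → V × V) (c : ℕ) (α : ℝ) (v₀ : V) (hc : 0 < c) (hα : 1 ≤ α)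
    (hmin : ∀ S : Finset V, S.Nonempty → S ≠ Finset.univ → c ≤ (cutEdges ends S).card)
    (r : ℕ) (hr1 : 2*α ≤ r) :
    ∀ k, ∀ P : Finset (Finset V), IsPart P → P.card = k →
      ((AA ends c α v₀ P).card : ℝ) ≤ hfun (2*α) r k := by
  intro k
  induction k using Nat.strong_induction_on with
  | _ k IH =>
  intro P hP hPk
  have hk0 : 1 ≤ k := by
    rcases Nat.eq_zero_or_pos k with rfl | h
    · obtain ⟨p, hp, -⟩ := hP.2.2 v₀
      rw [Finset.card_eq_zero.mp hPk] at hp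
      exact absurd hp (Finset.notMem_empty p)
    · exact h
  by_cases hkr : k ≤ r
  · rw [hfun_base _ _ hk0 hkr]
    have hb := card_AA_le_two_pow ends c α v₀ hP
    rw [hPk] at hb
    exact_mod_cast hb
  · -- recursive case : r < k
    push_neg at hkr
    have hk2 : 2 ≤ P.card := by
      have : (2:ℝ) ≤ 2*α := by linarith
      have : (2:ℝ) ≤ r := le_trans this hr1
      have : 2 ≤ r := by exact_mod_cast this
      omega
    set t := AA ends c α v₀ P with ht
    set Cr := crossing ends P with hCr
    have hsub : ∀ S ∈ t, cutEdges ends S ⊆ Cr := by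
      intro S hS
      exact cutEdges_subset_crossing ends
        ((Finset.mem_filter.mp hS).2.2.2.2 : compat P S)
    have hcut_le : ∀ S ∈ t, ((cutEdges ends S).card : ℝ) ≤ α * c := by
      intro S hS
      exact (Finset.mem_filter.mp hS).2.2.2.1
    -- double counting
    have eqswap : ∑ S ∈ t, (Cr.filter (fun e => e ∉ cutEdges ends S)).card
        = ∑ e ∈ Cr, (t.filter (fun S => e ∉ cutEdges ends S)).card := by
      simp_rw [Finset.card_filter]
      exact Finset.sum_comm
    have eqsdiff : ∀ S ∈ t, (Cr.filter (fun e => e ∉ cutEdges ends S)).card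
        = Cr.card - (cutEdges ends S).card := by
      intro S hS
      rw [← Finset.sdiff_eq_filter]
      exact Finset.card_sdiff_of_subset (hsub S hS)
    -- bound for each edge via merging
    have key3 : ∀ e ∈ Cr, ((t.filter (fun S => e ∉ cutEdges ends S)).card : ℝ)
        ≤ hfun (2*α) r (k-1) := by
      intro e he
      obtain ⟨P', hP', hcard, hcompat⟩ := merge ends hP he
      have hsub' : t.filter (fun S => e ∉ cutEdges ends S) ⊆ AA ends c α v₀ P' := by
        intro S hS
        obtain ⟨hSt, hSe⟩ := Finset.mem_filter.mp hS
        obtain ⟨-, hv, hne, hcut, hcompatP⟩ := Finset.mem_filter.mp hSt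
        exact Finset.mem_filter.mpr ⟨Finset.mem_univ _,
          hv, hne, hcut, hcompat S hcompatP hSe⟩
      calc ((t.filter (fun S => e ∉ cutEdges ends S)).card : ℝ)
          ≤ ((AA ends c α v₀ P').card : ℝ) := by
            exact_mod_cast Finset.card_le_card hsub'
        _ ≤ hfun (2*α) r (k-1) := IH (k-1) (by omega) P' hP' (by omega)
    -- put the count together, in ℝ
    have hβr : (2*α) ≤ (r:ℝ) := hr1
    have H6 : 0 ≤ hfun (2*α) r (k-1) := hfun_nonneg hβr _
    have count1 : ((t.card : ℝ)) * ((Cr.card : ℝ) - α*c)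
        ≤ (Cr.card : ℝ) * hfun (2*α) r (k-1) := by
      have l1 : (t.card : ℝ) * ((Cr.card : ℝ) - α*c)
          ≤ ∑ S ∈ t, ((Cr.card : ℝ) - ((cutEdges ends S).card : ℝ)) := by
        have := Finset.card_nsmul_le_sum t
          (fun S => ((Cr.card : ℝ) - ((cutEdges ends S).card : ℝ)))
          ((Cr.card : ℝ) - α*c)
          (fun S hS => by have := hcut_le S hS; linarith)
        simpa [nsmul_eq_mul] using this
      have l2 : ∑ S ∈ t, ((Cr.card : ℝ) - ((cutEdges ends S).card : ℝ))
          = ∑ S ∈ t, (((Cr.filter (fun e => e ∉ cutEdges ends S)).card : ℝ)) := by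
        refine Finset.sum_congr rfl fun S hS => ?_
        rw [eqsdiff S hS, Nat.cast_sub (Finset.card_le_card (hsub S hS))]
      have l3 : ∑ S ∈ t, (((Cr.filter (fun e => e ∉ cutEdges ends S)).card : ℝ))
          = ∑ e ∈ Cr, (((t.filter (fun S => e ∉ cutEdges ends S)).card : ℝ)) := by
        exact_mod_cast congrArg (Nat.cast : ℕ → ℝ) eqswap
      have l4 : ∑ e ∈ Cr, (((t.filter (fun S => e ∉ cutEdges ends S)).card : ℝ))
          ≤ (Cr.card : ℝ) * hfun (2*α) r (k-1) := by
        have := Finset.sum_le_card_nsmul Cr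
          (fun e => ((t.filter (fun S => e ∉ cutEdges ends S)).card : ℝ))
          (hfun (2*α) r (k-1)) key3
        simpa [nsmul_eq_mul] using this
      calc (t.card : ℝ) * ((Cr.card : ℝ) - α*c)
          ≤ ∑ S ∈ t, ((Cr.card : ℝ) - ((cutEdges ends S).card : ℝ)) := l1
        _ = _ := l2
        _ = _ := l3
        _ ≤ _ := l4
    have count2 : (k:ℝ) * c ≤ 2 * (Cr.card : ℝ) := by
      have := kc_le_two_m ends c hmin hP hk2
      rw [hPk] at this
      exact_mod_cast this
    -- final algebra
    have hkβ : 2*α < (k:ℝ) := lt_of_le_of_lt hr1 (by exact_mod_cast hkr)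
    have hC : (0:ℝ) < c := by exact_mod_cast hc
    have hα0 : (0:ℝ) < α := by linarith
    have hMα : α*(c:ℝ) < (Cr.card : ℝ) := by nlinarith
    rw [hfun_succ (2*α) r hkr, le_div_iff₀ (by linarith : (0:ℝ) < (k:ℝ) - 2*α)]
    set T := (t.card : ℝ) with hT
    set M := (Cr.card : ℝ) with hM
    set H := hfun (2*α) r (k-1) with hH
    set C := (c : ℝ) with hCc
    have hT0 : 0 ≤ T := Nat.cast_nonneg _
    have hXpos : (0:ℝ) < M - α*C := by linarith
    have hY0 : (0:ℝ) ≤ (k:ℝ)*C - 2*α*C := by nlinarith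
    have s2 : (M*H)*((k:ℝ)*C - 2*α*C) ≤ ((k:ℝ)*C*H)*(M - α*C) := by
      nlinarith [mul_nonneg (mul_nonneg (mul_nonneg hα0.le hC.le) H6)
        (sub_nonneg.mpr count2)]
    have s3 : T*((k:ℝ)*C - 2*α*C) ≤ (k:ℝ)*C*H := by
      apply le_of_mul_le_mul_right _ hXpos
      calc T*((k:ℝ)*C - 2*α*C)*(M - α*C)
          = (T*(M - α*C))*((k:ℝ)*C - 2*α*C) := by ring
        _ ≤ (M*H)*((k:ℝ)*C - 2*α*C) := mul_le_mul_of_nonneg_right count1 hY0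
        _ ≤ ((k:ℝ)*C*H)*(M - α*C) := s2
    apply le_of_mul_le_mul_right _ hC
    calc T*((k:ℝ) - 2*α)*C = T*((k:ℝ)*C - 2*α*C) := by ring
      _ ≤ (k:ℝ)*C*H := s3
      _ = H*(k:ℝ)*C := by ring

lemma two_pow_le_factorial : ∀ k : ℕ, 2 ^ k ≤ (k+1).factorial
  | 0 => by norm_num
  | k+1 => by
    rw [pow_succ, Nat.factorial_succ]
    calc 2^k * 2 ≤ (k+1).factorial * 2 :=
          Nat.mul_le_mul_right _ (two_pow_le_factorial k)
      _ ≤ (k+1).factorial * (k+2) := Nat.mul_le_mul_left _ (by omega)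
      _ = (k+2) * (k+1).factorial := Nat.mul_comm _ _

lemma prod_Icc_add_factorial (r : ℕ) :
    ∀ m : ℕ, (∏ j ∈ Finset.Icc 1 m, (j + r)) * r.factorial = (m + r).factorial
  | 0 => by simp
  | m+1 => by
    rw [Finset.prod_Icc_succ_top (by omega), mul_assoc,
      mul_comm (m + 1 + r), ← mul_assoc, prod_Icc_add_factorial r m]
    rw [show m + 1 + r = (m + r) + 1 by omega, Nat.factorial_succ]
    ring

lemma descFactorial_le (n r : ℕ) (h1 : 1 ≤ r) (hrn : r ≤ n) :
    n.descFactorial r ≤ n ^ (r-1) * (n - r + 1) := by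
  obtain ⟨j, rfl⟩ : ∃ j, r = j+1 := ⟨r-1, by omega⟩
  rw [Nat.descFactorial_eq_prod_range, Finset.prod_range_succ]
  simp only [Nat.add_sub_cancel]
  have h2 : n - j = n - (j+1) + 1 := by omega
  rw [h2]
  exact Nat.mul_le_mul_right _
    (le_trans (Finset.prod_le_prod' fun i _ => Nat.sub_le n i) (by simp [Finset.prod_const]))

lemma prod_add_gamma_ge {γ : ℝ} (h0 : 0 ≤ γ) (h1 : γ ≤ 1) :
    ∀ m : ℕ, (m.factorial : ℝ) * ((m:ℝ)+1) ^ γ ≤ ∏ j ∈ Finset.Icc 1 m, ((j:ℝ) + γ)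
  | 0 => by simp [Real.one_rpow]
  | m+1 => by
    have hm1 : (0:ℝ) < (m:ℝ) + 1 := by positivity
    have key : ((m:ℝ)+2) ^ γ ≤ ((m:ℝ)+1) ^ γ * (1 + γ/((m:ℝ)+1)) := by
      have hb : (1 + 1/((m:ℝ)+1)) ^ γ ≤ 1 + γ * (1/((m:ℝ)+1)) :=
        rpow_one_add_le_one_add_mul_self (le_trans (by norm_num : (-1:ℝ) ≤ 0) (by positivity)) h0 h1
      have heq : ((m:ℝ)+2) = ((m:ℝ)+1) * (1 + 1/((m:ℝ)+1)) := by
        field_simp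
        ring
      calc ((m:ℝ)+2) ^ γ = (((m:ℝ)+1) * (1 + 1/((m:ℝ)+1))) ^ γ := by rw [← heq]
        _ = ((m:ℝ)+1) ^ γ * (1 + 1/((m:ℝ)+1)) ^ γ :=
            Real.mul_rpow (by positivity) (by positivity)
        _ ≤ ((m:ℝ)+1) ^ γ * (1 + γ * (1/((m:ℝ)+1))) := by
            apply mul_le_mul_of_nonneg_left _ (Real.rpow_nonneg (by positivity) _)
            simpa [mul_one_div] using hb
        _ = ((m:ℝ)+1) ^ γ * (1 + γ/((m:ℝ)+1)) := by rw [mul_one_div]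
    rw [Finset.prod_Icc_succ_top (by omega)]
    have ih := prod_add_gamma_ge h0 h1 m
    have hrpow_nonneg : (0:ℝ) ≤ ((m:ℝ)+1) ^ γ := Real.rpow_nonneg (by positivity) _
    have hfacpos : (0:ℝ) < (m.factorial : ℝ) := by exact_mod_cast m.factorial_pos
    calc ((m+1).factorial : ℝ) * (((m+1:ℕ):ℝ)+1) ^ γ
        = ((m:ℝ)+1) * (m.factorial : ℝ) * ((m:ℝ)+2) ^ γ := by
          rw [Nat.factorial_succ]
          push_cast
          rw [show (m:ℝ)+1+1 = (m:ℝ)+2 by ring]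
      _ ≤ ((m:ℝ)+1) * (m.factorial : ℝ) * (((m:ℝ)+1) ^ γ * (1 + γ/((m:ℝ)+1))) := by
          apply mul_le_mul_of_nonneg_left key (by positivity)
      _ = ((m.factorial : ℝ) * ((m:ℝ)+1) ^ γ) * (((m:ℝ)+1) + γ) := by
          field_simp
      _ ≤ (∏ j ∈ Finset.Icc 1 m, ((j:ℝ) + γ)) * (((m:ℝ)+1) + γ) := by
          apply mul_le_mul_of_nonneg_right ih (by positivity)
      _ = (∏ j ∈ Finset.Icc 1 m, ((j:ℝ) + γ)) * (((m+1:ℕ):ℝ) + γ) := by push_cast; ring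

lemma hfun_prod_eq (β : ℝ) (r : ℕ) (h1r : 1 ≤ r) (hβr : β ≤ r) :
    ∀ n, r ≤ n →
      hfun β r n * ∏ i ∈ Finset.Icc (r+1) n, ((i:ℝ) - β)
        = 2 ^ (r-1) * ∏ i ∈ Finset.Icc (r+1) n, (i:ℝ) := by
  intro n hn
  induction n, hn using Nat.le_induction with
  | base =>
    rw [Finset.Icc_eq_empty (by omega), Finset.prod_empty, hfun_base β r h1r le_rfl]
    simp
  | succ n hn ih =>
    have hne : ((n:ℝ)+1) - β ≠ 0 := by
      have : (r:ℝ) ≤ n := by exact_mod_cast hn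
      have : β ≤ (n:ℝ) := le_trans hβr this
      linarith
    rw [hfun_succ β r (by omega : r < n+1)]
    simp only [Nat.add_sub_cancel]
    rw [Finset.prod_Icc_succ_top (by omega : r+1 ≤ n+1),
        Finset.prod_Icc_succ_top (by omega : r+1 ≤ n+1)]
    push_cast
    field_simp
    linear_combination ih


lemma hfun_le_rpow {α : ℝ} (hα : 1 ≤ α) {n : ℕ} (hn : 1 ≤ n) :
    hfun (2*α) (⌈2*α⌉₊) n ≤ (n:ℝ) ^ (2*α) := by
  set β := 2*α with hβdef
  set r := ⌈β⌉₊ with hrdef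
  have hβ2 : (2:ℝ) ≤ β := by rw [hβdef]; linarith
  have hβr : β ≤ (r:ℝ) := Nat.le_ceil β
  have hrβ : (r:ℝ) < β + 1 := Nat.ceil_lt_add_one (by linarith)
  have hr2 : 2 ≤ r := by exact_mod_cast le_trans hβ2 hβr
  set γ := (r:ℝ) - β with hγdef
  have hγ0 : 0 ≤ γ := by rw [hγdef]; linarith
  have hγ1 : γ < 1 := by rw [hγdef]; linarith
  by_cases hcase : n ≤ r
  · -- small case
    rw [hfun_base β r hn hcase]
    have hn1 : (1:ℝ) ≤ (n:ℝ) := by exact_mod_cast hn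
    have step1 : (2:ℝ)^(n-1) ≤ (n:ℝ)^((n-1 : ℕ):ℝ) := by
      rw [Real.rpow_natCast]
      rcases Nat.lt_or_ge n 2 with h | h
      · interval_cases n
        · simp
      · have hnat : 2^(n-1) ≤ n^(n-1) := Nat.pow_le_pow_left h _
        exact_mod_cast hnat
    have step2 : ((n-1 : ℕ):ℝ) ≤ β := by
      have h1 : (n:ℝ) ≤ r := by exact_mod_cast hcase
      have h2 : ((n-1:ℕ):ℝ) = (n:ℝ) - 1 := by
        push_cast [hn]
        ring
      rw [h2]; linarith
    calc (2:ℝ)^(n-1) ≤ (n:ℝ)^((n-1 : ℕ):ℝ) := step1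
      _ ≤ (n:ℝ)^β := Real.rpow_le_rpow_of_exponent_le hn1 step2
  · -- large case : r < n
    push_neg at hcase
    set m := n - r with hmdef
    have hnm : n = m + r := by omega
    have hm1n : m + 1 ≤ n := by omega
    have hprodpos : 0 < ∏ i ∈ Finset.Icc (r+1) n, ((i:ℝ) - β) := by
      apply Finset.prod_pos
      intro i hi
      have h1 : r + 1 ≤ i := (Finset.mem_Icc.mp hi).1
      have h2 : (r:ℝ) + 1 ≤ (i:ℝ) := by exact_mod_cast h1
      linarith
    have hid := hfun_prod_eq β r (by omega) hβr n (le_of_lt hcase)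
    -- reindexing both products
    have hreβ : ∏ i ∈ Finset.Icc (r+1) n, ((i:ℝ) - β)
        = ∏ j ∈ Finset.Icc 1 m, ((j:ℝ) + γ) := by
      apply Finset.prod_nbij' (fun i => i - r) (fun j => j + r)
      · intro a ha; simp only [Finset.mem_Icc] at ha ⊢; omega
      · intro a ha; simp only [Finset.mem_Icc] at ha ⊢; omega
      · intro a ha; simp only [Finset.mem_Icc] at ha; omega
      · intro a ha; simp only [Finset.mem_Icc] at ha; omega
      · intro a ha
        simp only [Finset.mem_Icc] at ha
        have hra : r ≤ a := by omega
        have hc : ((a - r : ℕ):ℝ) = (a:ℝ) - (r:ℝ) := by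
          push_cast [hra]
          ring
        rw [hc, hγdef]
        ring
    have hren : ∏ i ∈ Finset.Icc (r+1) n, (i:ℝ)
        = ((∏ j ∈ Finset.Icc 1 m, (j + r) : ℕ) : ℝ) := by
      push_cast
      apply Finset.prod_nbij' (fun i => i - r) (fun j => j + r)
      · intro a ha; simp only [Finset.mem_Icc] at ha ⊢; omega
      · intro a ha; simp only [Finset.mem_Icc] at ha ⊢; omega
      · intro a ha; simp only [Finset.mem_Icc] at ha; omega
      · intro a ha; simp only [Finset.mem_Icc] at ha; omega
      · intro a ha
        simp only [Finset.mem_Icc] at ha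
        have hra : r ≤ a := by omega
        have hc : ((a - r : ℕ):ℝ) = (a:ℝ) - (r:ℝ) := by
          push_cast [hra]
          ring
        rw [hc]
        ring
    -- ℕ facts
    have fact1 : (∏ j ∈ Finset.Icc 1 m, (j + r)) * r.factorial = n.factorial := by
      rw [prod_Icc_add_factorial r m, ← hnm]
    have fact2 : m.factorial * n.descFactorial r = n.factorial := by
      have := Nat.factorial_mul_descFactorial (show r ≤ n by omega)
      rwa [show n - r = m from rfl] at this
    have fact3 : n.descFactorial r ≤ n^(r-1) * (m + 1) := by
      have := descFactorial_le n r (by omega) (by omega)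
      rwa [show n - r + 1 = m + 1 by omega] at this
    have fact4 : 2^(r-1) ≤ r.factorial := by
      have := two_pow_le_factorial (r-1)
      rwa [show r - 1 + 1 = r by omega] at this
    -- real facts
    have hn0 : (0:ℝ) < (n:ℝ) := by positivity
    have hm1pos : (0:ℝ) < (m:ℝ) + 1 := by positivity
    have R1 : ((m:ℝ)+1) ≤ ((m:ℝ)+1)^γ * (n:ℝ)^(1-γ) := by
      have e1 : ((m:ℝ)+1) = ((m:ℝ)+1)^γ * ((m:ℝ)+1)^(1-γ) := by
        rw [← Real.rpow_add hm1pos]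
        norm_num
      calc ((m:ℝ)+1) = ((m:ℝ)+1)^γ * ((m:ℝ)+1)^(1-γ) := e1
        _ ≤ ((m:ℝ)+1)^γ * (n:ℝ)^(1-γ) :=
            mul_le_mul_of_nonneg_left
              (Real.rpow_le_rpow (by positivity) (by exact_mod_cast hm1n) (by linarith))
              (Real.rpow_nonneg (by positivity) _)
    have R2 : (n:ℝ)^((r-1:ℕ)) * (n:ℝ)^(1-γ) = (n:ℝ)^β := by
      rw [← Real.rpow_natCast (n:ℝ) (r-1), ← Real.rpow_add hn0]
      congr 1
      have : ((r-1:ℕ):ℝ) = (r:ℝ) - 1 := by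
        push_cast [show 1 ≤ r by omega]
        ring
      rw [this, hγdef]
      ring
    -- the core inequality
    have core : (2:ℝ)^(r-1) * ((∏ j ∈ Finset.Icc 1 m, (j + r) : ℕ) : ℝ)
        ≤ (n:ℝ)^β * ((m.factorial : ℝ) * ((m:ℝ)+1)^γ) := by
      have hrfacpos : (0:ℝ) < (r.factorial : ℝ) := by exact_mod_cast r.factorial_pos
      apply le_of_mul_le_mul_right _ hrfacpos
      have lhs_eq : (2:ℝ)^(r-1) * ((∏ j ∈ Finset.Icc 1 m, (j + r) : ℕ) : ℝ)
          * (r.factorial : ℝ)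
          = (2:ℝ)^(r-1) * ((m.factorial : ℝ) * ((n.descFactorial r : ℕ) : ℝ)) := by
        rw [mul_assoc]
        rw [show ((∏ j ∈ Finset.Icc 1 m, (j + r) : ℕ) : ℝ) * (r.factorial : ℝ)
            = ((n.factorial : ℕ) : ℝ) by exact_mod_cast congrArg (Nat.cast : ℕ → ℝ) fact1]
        rw [show ((n.factorial : ℕ) : ℝ) = (m.factorial : ℝ) * ((n.descFactorial r : ℕ) : ℝ)
            by exact_mod_cast (congrArg (Nat.cast : ℕ → ℝ) fact2).symm]
      rw [lhs_eq]
      have key : (2:ℝ)^(r-1) * ((n.descFactorial r : ℕ) : ℝ)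
          ≤ (n:ℝ)^β * ((m:ℝ)+1)^γ * (r.factorial : ℝ) := by
        have c1 : (2:ℝ)^(r-1) * ((n.descFactorial r : ℕ) : ℝ)
            ≤ (r.factorial : ℝ) * ((n:ℝ)^((r-1:ℕ)) * ((m:ℝ)+1)) := by
          have hnat : 2^(r-1) * n.descFactorial r ≤ r.factorial * (n^(r-1) * (m+1)) :=
            Nat.mul_le_mul fact4 fact3
          calc (2:ℝ)^(r-1) * ((n.descFactorial r : ℕ) : ℝ)
              = ((2^(r-1) * n.descFactorial r : ℕ) : ℝ) := by push_cast; ring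
            _ ≤ ((r.factorial * (n^(r-1) * (m+1)) : ℕ) : ℝ) := by exact_mod_cast hnat
            _ = (r.factorial : ℝ) * ((n:ℝ)^((r-1:ℕ)) * ((m:ℝ)+1)) := by push_cast; ring
        have c2 : (n:ℝ)^((r-1:ℕ)) * ((m:ℝ)+1)
            ≤ (n:ℝ)^β * ((m:ℝ)+1)^γ := by
          calc (n:ℝ)^((r-1:ℕ)) * ((m:ℝ)+1)
              ≤ (n:ℝ)^((r-1:ℕ)) * (((m:ℝ)+1)^γ * (n:ℝ)^(1-γ)) :=
                mul_le_mul_of_nonneg_left R1 (by positivity)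
            _ = ((n:ℝ)^((r-1:ℕ)) * (n:ℝ)^(1-γ)) * ((m:ℝ)+1)^γ := by ring
            _ = (n:ℝ)^β * ((m:ℝ)+1)^γ := by rw [R2]
        calc (2:ℝ)^(r-1) * ((n.descFactorial r : ℕ) : ℝ)
            ≤ (r.factorial : ℝ) * ((n:ℝ)^((r-1:ℕ)) * ((m:ℝ)+1)) := c1
          _ ≤ (r.factorial : ℝ) * ((n:ℝ)^β * ((m:ℝ)+1)^γ) :=
              mul_le_mul_of_nonneg_left c2 (by positivity)
          _ = (n:ℝ)^β * ((m:ℝ)+1)^γ * (r.factorial : ℝ) := by ring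
      have hmfac : (0:ℝ) ≤ (m.factorial : ℝ) := by positivity
      calc (2:ℝ)^(r-1) * ((m.factorial : ℝ) * ((n.descFactorial r : ℕ) : ℝ))
          = ((2:ℝ)^(r-1) * ((n.descFactorial r : ℕ) : ℝ)) * (m.factorial : ℝ) := by ring
        _ ≤ ((n:ℝ)^β * ((m:ℝ)+1)^γ * (r.factorial : ℝ)) * (m.factorial : ℝ) :=
            mul_le_mul_of_nonneg_right key hmfac
        _ = (n:ℝ)^β * ((m.factorial : ℝ) * ((m:ℝ)+1)^γ) * (r.factorial : ℝ) := by ring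
    -- assemble
    apply le_of_mul_le_mul_right _ hprodpos
    rw [hid]
    calc (2:ℝ)^(r-1) * ∏ i ∈ Finset.Icc (r+1) n, (i:ℝ)
        = (2:ℝ)^(r-1) * ((∏ j ∈ Finset.Icc 1 m, (j + r) : ℕ) : ℝ) := by rw [hren]
      _ ≤ (n:ℝ)^β * ((m.factorial : ℝ) * ((m:ℝ)+1)^γ) := core
      _ ≤ (n:ℝ)^β * ∏ j ∈ Finset.Icc 1 m, ((j:ℝ) + γ) := by
          apply mul_le_mul_of_nonneg_left (prod_add_gamma_ge hγ0 (le_of_lt hγ1) m)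
            (Real.rpow_nonneg (by positivity) _)
      _ = (n:ℝ)^β * ∏ i ∈ Finset.Icc (r+1) n, ((i:ℝ) - β) := by rw [hreβ]


end KargerAux

/-- Karger's cut-counting bound: in a finite multigraph whose minimum cut has value
`c > 0`, the number of cuts `(S, Sᶜ)` of size at most `α·c` (for `α ≥ 1`) is at most
`|V|^{2α}`.  Cuts are counted once each by taking the side containing a fixed vertex
`v₀`. -/
theorem karger_cut_counting
    (V E : Type) [Fintype V] [Fintype E] [DecidableEq V]
    (ends : E → V × V) (c : ℕ) (α : ℝ) (hc : 0 < c) (hα : 1 ≤ α)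
    (hmin : ∀ S : Finset V, S.Nonempty → S ≠ Finset.univ → c ≤ (cutEdges ends S).card)
    (v₀ : V) :
    (((Finset.univ : Finset (Finset V)).filter (fun S =>
        v₀ ∈ S ∧ S ≠ Finset.univ ∧ ((cutEdges ends S).card : ℝ) ≤ α * c)).card : ℝ)
      ≤ (Fintype.card V : ℝ) ^ (2 * α) := by
  classical
  set P₀ : Finset (Finset V) := Finset.univ.image (fun v => ({v} : Finset V)) with hP₀
  have hinj : Function.Injective (fun v : V => ({v} : Finset V)) := fun a b h => by
    simpa using h
  have hPart : KargerAux.IsPart P₀ := by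
    refine ⟨?_, ?_, ?_⟩
    · intro p hp
      obtain ⟨v, -, rfl⟩ := Finset.mem_image.mp hp
      exact ⟨v, Finset.mem_singleton_self v⟩
    · intro p hp q hq hpq
      obtain ⟨v, -, rfl⟩ := Finset.mem_image.mp hp
      obtain ⟨w, -, rfl⟩ := Finset.mem_image.mp hq
      rw [Finset.disjoint_singleton_left, Finset.mem_singleton]
      intro h
      exact hpq (by rw [h])
    · intro v
      exact ⟨{v}, Finset.mem_image.mpr ⟨v, Finset.mem_univ v, rfl⟩,
        Finset.mem_singleton_self v⟩
  have hcard : P₀.card = Fintype.card V := by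
    rw [hP₀, Finset.card_image_of_injective _ hinj, Finset.card_univ]
  have hset : (Finset.univ : Finset (Finset V)).filter (fun S =>
        v₀ ∈ S ∧ S ≠ Finset.univ ∧ ((cutEdges ends S).card : ℝ) ≤ α * c)
      = KargerAux.AA ends c α v₀ P₀ := by
    ext S
    simp only [KargerAux.AA, Finset.mem_filter, Finset.mem_univ, true_and]
    constructor
    · rintro ⟨h1, h2, h3⟩
      refine ⟨h1, h2, h3, ?_⟩
      intro p hp
      obtain ⟨v, -, rfl⟩ := Finset.mem_image.mp hp
      by_cases hv : v ∈ S
      · exact Or.inl (Finset.singleton_subset_iff.mpr hv)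
      · exact Or.inr (Finset.disjoint_singleton_left.mpr hv)
    · rintro ⟨h1, h2, h3, -⟩
      exact ⟨h1, h2, h3⟩
  have hn1 : 1 ≤ Fintype.card V := Fintype.card_pos_iff.mpr ⟨v₀⟩
  have hr1 : 2*α ≤ (⌈2*α⌉₊ : ℝ) := Nat.le_ceil _
  calc (((Finset.univ : Finset (Finset V)).filter (fun S =>
        v₀ ∈ S ∧ S ≠ Finset.univ ∧ ((cutEdges ends S).card : ℝ) ≤ α * c)).card : ℝ)
      = ((KargerAux.AA ends c α v₀ P₀).card : ℝ) := by rw [hset]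
    _ ≤ KargerAux.hfun (2*α) (⌈2*α⌉₊) (Fintype.card V) :=
        KargerAux.main_ind ends c α v₀ hc hα hmin _ hr1 _ P₀ hPart hcard
    _ ≤ (Fintype.card V : ℝ) ^ (2*α) := KargerAux.hfun_le_rpow hα hn1
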